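/- Let X₁,…,Xₙ ∈ Sym⁺(p) and suppose there exist S₀ ∈ Sym⁺(p) with distinct eigenvalues and r ∈ (0, δ(S₀)/3) such that d_SR(X_i, S₀) ≤ r for all i. Then every minimizer of the sample Fréchet function f_n(S) = (1/n)∑ d_SR²(X_i, S) over Sym⁺(p) has p distinct eigenvalues. -/

import Mathlib

open scoped BigOperators
open Matrix

namespace SR

variable {p : ℕ}

/-- Frobenius norm of a matrix. -/
noncomputable def frobNorm (A : Matrix (Fin p) (Fin p) ℝ) : ℝ :=
  Real.sqrt (∑ i, ∑ j, (A i j) ^ 2)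

/-- `U` is a special orthogonal (rotation) matrix. -/
def IsSO (U : Matrix (Fin p) (Fin p) ℝ) : Prop :=
  U * Uᵀ = 1 ∧ U.det = 1

/-- `D` is diagonal with positive diagonal entries. -/
def IsDiagPos (D : Matrix (Fin p) (Fin p) ℝ) : Prop :=
  D.IsDiag ∧ ∀ i, 0 < D i i

/-- `X` is symmetric positive definite. -/
def IsSPD (X : Matrix (Fin p) (Fin p) ℝ) : Prop :=
  X.IsSymm ∧ X.PosDef

/-- Membership in the eigen-decomposition space `M(p) = SO(p) × Diag⁺(p)`. -/
def IsM (m : Matrix (Fin p) (Fin p) ℝ × Matrix (Fin p) (Fin p) ℝ) : Prop :=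
  IsSO m.1 ∧ IsDiagPos m.2

/-- The eigen-composition map `F(U, D) = U D Uᵀ`. -/
def Fmap (m : Matrix (Fin p) (Fin p) ℝ × Matrix (Fin p) (Fin p) ℝ) :
    Matrix (Fin p) (Fin p) ℝ := m.1 * m.2 * m.1ᵀ

/-- `m = (U, D)` is an eigen-decomposition of `X`. -/
def IsEigenDecomp (X : Matrix (Fin p) (Fin p) ℝ)
    (m : Matrix (Fin p) (Fin p) ℝ × Matrix (Fin p) (Fin p) ℝ) : Prop :=
  IsM m ∧ Fmap m = X

/-- Geodesic distance on `SO(p)`: `(1/√2)‖Log (U₂ U₁ᵀ)‖_F`, where `Log` denotes a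
minimal-Frobenius-norm skew-symmetric logarithm. -/
noncomputable def dSO (U₁ U₂ : Matrix (Fin p) (Fin p) ℝ) : ℝ :=
  sInf {x : ℝ | ∃ A : Matrix (Fin p) (Fin p) ℝ, Aᵀ = -A ∧
    NormedSpace.exp A = U₂ * U₁ᵀ ∧ x = (1 / Real.sqrt 2) * frobNorm A}

/-- Geodesic distance on `Diag⁺(p)`: `‖Log D₁ − Log D₂‖_F`. -/
noncomputable def dDiag (D₁ D₂ : Matrix (Fin p) (Fin p) ℝ) : ℝ :=
  Real.sqrt (∑ i, (Real.log (D₁ i i) - Real.log (D₂ i i)) ^ 2)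

/-- Geodesic distance on `M(p)` with weight `k` on the rotation part. -/
noncomputable def dM (k : ℝ)
    (m₁ m₂ : Matrix (Fin p) (Fin p) ℝ × Matrix (Fin p) (Fin p) ℝ) : ℝ :=
  Real.sqrt (k * (dSO m₁.1 m₂.1) ^ 2 + (dDiag m₁.2 m₂.2) ^ 2)

/-- Scaling-rotation distance between SPD matrices. -/
noncomputable def dSR (k : ℝ) (X Y : Matrix (Fin p) (Fin p) ℝ) : ℝ :=
  sInf {x : ℝ | ∃ mX mY, IsEigenDecomp X mX ∧ IsEigenDecomp Y mY ∧ x = dM k mX mY}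

/-- Partial scaling-rotation distance. -/
noncomputable def dPSR (k : ℝ) (X : Matrix (Fin p) (Fin p) ℝ)
    (m : Matrix (Fin p) (Fin p) ℝ × Matrix (Fin p) (Fin p) ℝ) : ℝ :=
  sInf {x : ℝ | ∃ mX, IsEigenDecomp X mX ∧ x = dM k mX m}

/-- `P` is a signed permutation matrix. -/
def IsSignedPermMatrix (P : Matrix (Fin p) (Fin p) ℝ) : Prop :=
  ∃ (π : Equiv.Perm (Fin p)) (ε : Fin p → ℝ),
    (∀ i, ε i = 1 ∨ ε i = -1) ∧ ∀ i j, P i j = ε i * (if i = π j then 1 else 0)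

/-- `P` is an even signed permutation matrix (an element of `G(p)`). -/
def IsEvenSignedPerm (P : Matrix (Fin p) (Fin p) ℝ) : Prop :=
  IsSignedPermMatrix P ∧ P.det = 1

/-- `β_{G(p)}`: the minimal rotation distance from the identity to a nonidentity
even signed permutation matrix. -/
noncomputable def betaG (p : ℕ) : ℝ :=
  sInf {x : ℝ | ∃ h : Matrix (Fin p) (Fin p) ℝ, IsEvenSignedPerm h ∧ h ≠ 1 ∧ x = dSO 1 h}

/-- `S` has a repeated eigenvalue (belongs to a lower stratum). -/
def HasRepeatedEig (S : Matrix (Fin p) (Fin p) ℝ) : Prop :=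
  ∃ m, IsEigenDecomp S m ∧ ¬ Function.Injective (fun i => m.2 i i)

/-- `S` has `p` distinct eigenvalues (belongs to the top stratum). -/
def HasDistinctEigs (S : Matrix (Fin p) (Fin p) ℝ) : Prop :=
  ∃ m, IsEigenDecomp S m ∧ Function.Injective (fun i => m.2 i i)

/-- `δ(S)`: scaling-rotation distance from `S` to the lower strata. -/
noncomputable def deltaFun (k : ℝ) (S : Matrix (Fin p) (Fin p) ℝ) : ℝ :=
  sInf {x : ℝ | ∃ S', IsSPD S' ∧ HasRepeatedEig S' ∧ x = dSR k S S'}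

/-- Diameter of `SO(p)` in the rotation distance. -/
noncomputable def diamSO (p : ℕ) : ℝ :=
  sSup {x : ℝ | ∃ U V : Matrix (Fin p) (Fin p) ℝ, IsSO U ∧ IsSO V ∧ x = dSO U V}

/-- Euclidean (ℓ²) triangle inequality for square-root-of-sum-of-squares. -/
lemma sqrt_sum_sq_add_le {ι : Type*} [Fintype ι] (f g : ι → ℝ) :
    Real.sqrt (∑ i, (f i + g i) ^ 2) ≤
      Real.sqrt (∑ i, f i ^ 2) + Real.sqrt (∑ i, g i ^ 2) := by
  set F := Real.sqrt (∑ i, f i ^ 2) with hF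
  set G := Real.sqrt (∑ i, g i ^ 2) with hG
  have hF0 : 0 ≤ F := Real.sqrt_nonneg _
  have hG0 : 0 ≤ G := Real.sqrt_nonneg _
  have hFsq : F ^ 2 = ∑ i, f i ^ 2 := Real.sq_sqrt (by positivity)
  have hGsq : G ^ 2 = ∑ i, g i ^ 2 := Real.sq_sqrt (by positivity)
  have hCS : (∑ i, f i * g i) ≤ F * G := by
    have h1 : (∑ i, f i * g i) ^ 2 ≤ (∑ i, f i ^ 2) * ∑ i, g i ^ 2 :=
      Finset.sum_mul_sq_le_sq_mul_sq _ _ _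
    calc (∑ i, f i * g i) ≤ |∑ i, f i * g i| := le_abs_self _
      _ = Real.sqrt ((∑ i, f i * g i) ^ 2) := (Real.sqrt_sq_eq_abs _).symm
      _ ≤ Real.sqrt ((∑ i, f i ^ 2) * ∑ i, g i ^ 2) := Real.sqrt_le_sqrt h1
      _ = F * G := by rw [Real.sqrt_mul (by positivity), hF, hG]
  have key : (∑ i, (f i + g i) ^ 2) ≤ (F + G) ^ 2 := by
    have : (∑ i, (f i + g i) ^ 2) = (∑ i, f i ^ 2) + 2 * (∑ i, f i * g i) + ∑ i, g i ^ 2 := by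
      rw [Finset.mul_sum, ← Finset.sum_add_distrib, ← Finset.sum_add_distrib]
      exact Finset.sum_congr rfl fun i _ => by ring
    rw [this]; nlinarith [hCS]
  calc Real.sqrt (∑ i, (f i + g i) ^ 2) ≤ Real.sqrt ((F + G) ^ 2) := Real.sqrt_le_sqrt key
    _ = F + G := by rw [Real.sqrt_sq (by positivity)]

lemma mink2 (x₁ y₁ x₂ y₂ : ℝ) :
    Real.sqrt ((x₁ + x₂) ^ 2 + (y₁ + y₂) ^ 2) ≤
      Real.sqrt (x₁ ^ 2 + y₁ ^ 2) + Real.sqrt (x₂ ^ 2 + y₂ ^ 2) := by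
  have := sqrt_sum_sq_add_le (ι := Fin 2) ![x₁, y₁] ![x₂, y₂]
  simpa [Fin.sum_univ_two] using this

lemma frobNorm_nonneg (A : Matrix (Fin p) (Fin p) ℝ) : 0 ≤ frobNorm A :=
  Real.sqrt_nonneg _

lemma frobNorm_zero : frobNorm (0 : Matrix (Fin p) (Fin p) ℝ) = 0 := by
  simp [frobNorm]

lemma frobNorm_transpose (A : Matrix (Fin p) (Fin p) ℝ) : frobNorm Aᵀ = frobNorm A := by
  unfold frobNorm
  rw [Finset.sum_comm]
  simp [Matrix.transpose_apply]

lemma frobNorm_add_le (A B : Matrix (Fin p) (Fin p) ℝ) :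
    frobNorm (A + B) ≤ frobNorm A + frobNorm B := by
  have h := sqrt_sum_sq_add_le (ι := Fin p × Fin p) (fun x => A x.1 x.2) (fun x => B x.1 x.2)
  unfold frobNorm
  rw [show (∑ i, ∑ j, ((A + B) i j) ^ 2) = ∑ x : Fin p × Fin p, ((A + B) x.1 x.2) ^ 2 from
        (Fintype.sum_prod_type (fun x : Fin p × Fin p => ((A + B) x.1 x.2) ^ 2)).symm,
      show (∑ i, ∑ j, (A i j) ^ 2) = ∑ x : Fin p × Fin p, (A x.1 x.2) ^ 2 from
        (Fintype.sum_prod_type (fun x : Fin p × Fin p => (A x.1 x.2) ^ 2)).symm,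
      show (∑ i, ∑ j, (B i j) ^ 2) = ∑ x : Fin p × Fin p, (B x.1 x.2) ^ 2 from
        (Fintype.sum_prod_type (fun x : Fin p × Fin p => (B x.1 x.2) ^ 2)).symm]
  simpa [Matrix.add_apply] using h

lemma dSO_nonneg (U V : Matrix (Fin p) (Fin p) ℝ) : 0 ≤ dSO U V := by
  apply Real.sInf_nonneg
  rintro x ⟨A, -, -, rfl⟩
  have := frobNorm_nonneg A
  positivity

lemma dSO_bddBelow (U V : Matrix (Fin p) (Fin p) ℝ) :
    BddBelow {x : ℝ | ∃ A : Matrix (Fin p) (Fin p) ℝ, Aᵀ = -A ∧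
      NormedSpace.exp A = V * Uᵀ ∧ x = (1 / Real.sqrt 2) * frobNorm A} := by
  refine ⟨0, ?_⟩
  rintro x ⟨A, -, -, rfl⟩
  have := frobNorm_nonneg A
  positivity

lemma dSO_le_of_exp (U V A : Matrix (Fin p) (Fin p) ℝ) (h1 : Aᵀ = -A)
    (h2 : NormedSpace.exp A = V * Uᵀ) :
    dSO U V ≤ (1 / Real.sqrt 2) * frobNorm A :=
  csInf_le (dSO_bddBelow U V) ⟨A, h1, h2, rfl⟩

lemma exists_skew_log_lt (U V : Matrix (Fin p) (Fin p) ℝ) {ε : ℝ} (hε : 0 < ε) :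
    ∃ A : Matrix (Fin p) (Fin p) ℝ, Aᵀ = -A ∧
      (1 / Real.sqrt 2) * frobNorm A < dSO U V + ε := by
  by_cases hs : ({x : ℝ | ∃ A : Matrix (Fin p) (Fin p) ℝ, Aᵀ = -A ∧
      NormedSpace.exp A = V * Uᵀ ∧ x = (1 / Real.sqrt 2) * frobNorm A}).Nonempty
  · obtain ⟨x, hx, hlt⟩ := Real.lt_sInf_add_pos hs hε
    obtain ⟨A, hA1, hA2, rfl⟩ := hx
    exact ⟨A, hA1, hlt⟩
  · refine ⟨0, by simp, ?_⟩
    have h0 : dSO U V = 0 := by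
      unfold dSO
      rw [Set.not_nonempty_iff_eq_empty.mp hs, Real.sInf_empty]
    rw [frobNorm_zero, h0]
    simpa using hε

lemma dSO_symm (U V : Matrix (Fin p) (Fin p) ℝ) : dSO U V = dSO V U := by
  unfold dSO
  congr 1
  ext x
  constructor <;> rintro ⟨A, h1, h2, rfl⟩
  · refine ⟨Aᵀ, by rw [h1]; simp [Matrix.transpose_neg, h1], ?_, (by rw [frobNorm_transpose])⟩
    rw [Matrix.exp_transpose, h2, Matrix.transpose_mul, Matrix.transpose_transpose]
  · refine ⟨Aᵀ, by rw [h1]; simp [Matrix.transpose_neg, h1], ?_, (by rw [frobNorm_transpose])⟩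
    rw [Matrix.exp_transpose, h2, Matrix.transpose_mul, Matrix.transpose_transpose]

lemma IsSO.mul {U V : Matrix (Fin p) (Fin p) ℝ} (hU : IsSO U) (hV : IsSO V) : IsSO (U * V) := by
  constructor
  · rw [Matrix.transpose_mul, Matrix.mul_assoc, ← Matrix.mul_assoc V, hV.1, Matrix.one_mul, hU.1]
  · rw [Matrix.det_mul, hU.2, hV.2, one_mul]

lemma isSO_exp (A : Matrix (Fin p) (Fin p) ℝ) (h : Aᵀ = -A) :
    IsSO (NormedSpace.exp A) := by
  have horth : NormedSpace.exp A * (NormedSpace.exp A)ᵀ = 1 := by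
    rw [← Matrix.exp_transpose, h, ← Matrix.exp_add_of_commute A (-A) (Commute.neg_right (Commute.refl A))]
    simp [NormedSpace.exp_zero]
  refine ⟨horth, ?_⟩
  have hsq : (NormedSpace.exp A).det * (NormedSpace.exp A).det = 1 := by
    have := congrArg Matrix.det horth
    rwa [Matrix.det_mul, Matrix.det_transpose, Matrix.det_one] at this
  have hpos : 0 ≤ (NormedSpace.exp A).det := by
    have hA2 : ((2:ℝ)⁻¹ • A) + ((2:ℝ)⁻¹ • A) = A := by
      rw [← add_smul]; norm_num
    have : NormedSpace.exp A =
        NormedSpace.exp ((2:ℝ)⁻¹ • A) * NormedSpace.exp ((2:ℝ)⁻¹ • A) := by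
      rw [← Matrix.exp_add_of_commute _ _ (Commute.refl _), hA2]
    rw [this, Matrix.det_mul]
    exact mul_self_nonneg _
  rcases mul_self_eq_one_iff.mp hsq with h1 | h1
  · exact h1
  · exfalso; rw [h1] at hpos; linarith

lemma dDiag_nonneg (D E : Matrix (Fin p) (Fin p) ℝ) : 0 ≤ dDiag D E := Real.sqrt_nonneg _

lemma dDiag_symm (D E : Matrix (Fin p) (Fin p) ℝ) : dDiag D E = dDiag E D := by
  unfold dDiag
  congr 1
  exact Finset.sum_congr rfl fun i _ => by ring

lemma dDiag_triangle (D E F : Matrix (Fin p) (Fin p) ℝ) :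
    dDiag D F ≤ dDiag D E + dDiag E F := by
  unfold dDiag
  have h := sqrt_sum_sq_add_le (fun i => Real.log (D i i) - Real.log (E i i))
    (fun i => Real.log (E i i) - Real.log (F i i))
  simpa using h

lemma dM_nonneg (k : ℝ) (m₁ m₂ : Matrix (Fin p) (Fin p) ℝ × Matrix (Fin p) (Fin p) ℝ) :
    0 ≤ dM k m₁ m₂ := Real.sqrt_nonneg _

lemma dM_symm (k : ℝ) (m₁ m₂ : Matrix (Fin p) (Fin p) ℝ × Matrix (Fin p) (Fin p) ℝ) :
    dM k m₁ m₂ = dM k m₂ m₁ := by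
  unfold dM
  rw [dSO_symm, dDiag_symm]

lemma dSR_nonneg (k : ℝ) (X Y : Matrix (Fin p) (Fin p) ℝ) : 0 ≤ dSR k X Y := by
  apply Real.sInf_nonneg
  rintro x ⟨m1, m2, -, -, rfl⟩
  exact dM_nonneg k m1 m2

lemma dSR_bddBelow (k : ℝ) (X Y : Matrix (Fin p) (Fin p) ℝ) :
    BddBelow {x : ℝ | ∃ mX mY, IsEigenDecomp X mX ∧ IsEigenDecomp Y mY ∧ x = dM k mX mY} := by
  refine ⟨0, ?_⟩
  rintro x ⟨m1, m2, -, -, rfl⟩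
  exact dM_nonneg k m1 m2

lemma dSR_le_dM (k : ℝ) (X Y : Matrix (Fin p) (Fin p) ℝ)
    (mX mY : Matrix (Fin p) (Fin p) ℝ × Matrix (Fin p) (Fin p) ℝ)
    (hX : IsEigenDecomp X mX) (hY : IsEigenDecomp Y mY) :
    dSR k X Y ≤ dM k mX mY :=
  csInf_le (dSR_bddBelow k X Y) ⟨mX, mY, hX, hY, rfl⟩

lemma dSR_symm (k : ℝ) (X Y : Matrix (Fin p) (Fin p) ℝ) : dSR k X Y = dSR k Y X := by
  unfold dSR
  congr 1
  ext x
  constructor <;> rintro ⟨m1, m2, h1, h2, rfl⟩ <;> exact ⟨m2, m1, h2, h1, dM_symm k m1 m2⟩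

lemma deltaFun_bddBelow (k : ℝ) (S : Matrix (Fin p) (Fin p) ℝ) :
    BddBelow {x : ℝ | ∃ S', IsSPD S' ∧ HasRepeatedEig S' ∧ x = dSR k S S'} := by
  refine ⟨0, ?_⟩
  rintro x ⟨S', -, -, rfl⟩
  exact dSR_nonneg k S S'

lemma deltaFun_le (k : ℝ) (S S' : Matrix (Fin p) (Fin p) ℝ) (h1 : IsSPD S')
    (h2 : HasRepeatedEig S') : deltaFun k S ≤ dSR k S S' :=
  csInf_le (deltaFun_bddBelow k S) ⟨S', h1, h2, rfl⟩

lemma exists_eigenDecomp (X : Matrix (Fin p) (Fin p) ℝ) (hX : IsSPD X) :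
    ∃ m, IsEigenDecomp X m := by
  have hH : X.IsHermitian := hX.2.1
  set U : Matrix (Fin p) (Fin p) ℝ :=
    (Matrix.IsHermitian.eigenvectorUnitary hH : Matrix (Fin p) (Fin p) ℝ) with hU
  set d : Fin p → ℝ := hH.eigenvalues with hd
  have hdpos : ∀ i, 0 < d i := fun i => hX.2.eigenvalues_pos i
  have hspec : X = U * Matrix.diagonal d * Uᵀ := by
    have := hH.spectral_theorem
    rwa [Unitary.conjStarAlgAut_apply, Matrix.star_eq_conjTranspose, Matrix.conjTranspose_eq_transpose_of_trivial,
      RCLike.ofReal_real_eq_id, Function.id_comp] at this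
  have horth : U * Uᵀ = 1 := by
    have := Matrix.mem_unitaryGroup_iff.mp (Matrix.IsHermitian.eigenvectorUnitary hH).2
    rwa [Matrix.star_eq_conjTranspose, Matrix.conjTranspose_eq_transpose_of_trivial] at this
  -- choose signs to make the determinant one
  have hdet2 : U.det * U.det = 1 := by
    have := congrArg Matrix.det horth
    rwa [Matrix.det_mul, Matrix.det_transpose, Matrix.det_one] at this
  obtain ⟨ε, hε1, hεdet⟩ : ∃ ε : Fin p → ℝ, (∀ i, ε i * ε i = 1) ∧ U.det * ∏ i, ε i = 1 := by
    rcases mul_self_eq_one_iff.mp hdet2 with h1 | h1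
    · exact ⟨fun _ => 1, fun _ => by norm_num, by simp [h1]⟩
    · have hp : p ≠ 0 := by
        rintro rfl
        rw [Matrix.det_isEmpty] at h1
        norm_num at h1
      refine ⟨fun j => if j = (⟨0, Nat.pos_of_ne_zero hp⟩ : Fin p) then -1 else 1,
        fun i => by dsimp only; split <;> norm_num, ?_⟩
      rw [Finset.prod_ite_eq' Finset.univ (⟨0, Nat.pos_of_ne_zero hp⟩ : Fin p)
        (fun _ => (-1 : ℝ))]
      simp [h1]
  set E : Matrix (Fin p) (Fin p) ℝ := Matrix.diagonal ε with hE
  have hEE : E * E = 1 := by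
    have h : (fun i => ε i * ε i) = fun _ => (1:ℝ) := funext hε1
    rw [hE, Matrix.diagonal_mul_diagonal, h, Matrix.diagonal_one]
  have hEt : Eᵀ = E := Matrix.diagonal_transpose ε
  refine ⟨(U * E, Matrix.diagonal d), ⟨⟨?_, ?_⟩, Matrix.isDiag_diagonal d, fun i => by
    simpa using hdpos i⟩, ?_⟩
  · rw [Matrix.transpose_mul, hEt, Matrix.mul_assoc, ← Matrix.mul_assoc E, hEE,
      Matrix.one_mul, horth]
  · rw [Matrix.det_mul, hE, Matrix.det_diagonal, hεdet]
  · show U * E * Matrix.diagonal d * (U * E)ᵀ = X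
    rw [Matrix.transpose_mul, hEt, hspec]
    have hED : E * Matrix.diagonal d * E = Matrix.diagonal d := by
      have h : (fun i => ε i * d i * ε i) = d := funext fun i => by
        linear_combination (d i) * hε1 i
      rw [hE, Matrix.diagonal_mul_diagonal, Matrix.diagonal_mul_diagonal, h]
    calc U * E * Matrix.diagonal d * (E * Uᵀ)
        = U * (E * Matrix.diagonal d * E) * Uᵀ := by
          simp only [Matrix.mul_assoc]
      _ = U * Matrix.diagonal d * Uᵀ := by rw [hED, Matrix.mul_assoc]

lemma exists_perm_of_decomps (X : Matrix (Fin p) (Fin p) ℝ)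
    (m₁ m₂ : Matrix (Fin p) (Fin p) ℝ × Matrix (Fin p) (Fin p) ℝ)
    (h₁ : IsEigenDecomp X m₁) (h₂ : IsEigenDecomp X m₂)
    (hinj : Function.Injective fun i => m₁.2 i i) :
    ∃ σ : Equiv.Perm (Fin p), ∀ i, m₂.2 (σ i) (σ i) = m₁.2 i i := by
  obtain ⟨⟨hSO₁, hD₁⟩, hF₁⟩ := h₁
  obtain ⟨⟨hSO₂, hD₂⟩, hF₂⟩ := h₂
  set U₁ := m₁.1; set D₁ := m₁.2; set U₂ := m₂.1; set D₂ := m₂.2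
  have h21 : U₂ᵀ * U₂ = 1 := mul_eq_one_comm.mp hSO₂.1
  set M := U₂ᵀ * U₁ with hM
  have hMMT : M * Mᵀ = 1 := by
    rw [hM, Matrix.transpose_mul, Matrix.transpose_transpose, Matrix.mul_assoc,
      ← Matrix.mul_assoc U₁, hSO₁.1, Matrix.one_mul, h21]
  have hMD : M * D₁ * Mᵀ = D₂ := by
    have e : U₁ * D₁ * U₁ᵀ = U₂ * D₂ * U₂ᵀ := hF₁.trans hF₂.symm
    have : U₂ᵀ * (U₁ * D₁ * U₁ᵀ) * U₂ = D₂ := by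
      rw [e]
      calc U₂ᵀ * (U₂ * D₂ * U₂ᵀ) * U₂ = (U₂ᵀ * U₂) * D₂ * (U₂ᵀ * U₂) := by
            simp only [Matrix.mul_assoc]
        _ = D₂ := by rw [h21, Matrix.one_mul, Matrix.mul_one]
    rw [← this, hM, Matrix.transpose_mul, Matrix.transpose_transpose]
    simp only [Matrix.mul_assoc]
  have hdetM : M.det * M.det = 1 := by
    have := congrArg Matrix.det hMMT
    rwa [Matrix.det_mul, Matrix.det_transpose, Matrix.det_one] at this
  -- for every scalar c, det (D₂ - c • 1) = det (D₁ - c • 1)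
  have hdet : ∀ c : ℝ, (D₂ - c • 1).det = (D₁ - c • 1).det := by
    intro c
    have hconj : M * (D₁ - c • 1) * Mᵀ = D₂ - c • 1 := by
      rw [Matrix.mul_sub, Matrix.sub_mul, hMD, Matrix.mul_smul, Matrix.mul_one,
        Matrix.smul_mul, hMMT]
    calc (D₂ - c • 1).det = (M * (D₁ - c • 1) * Mᵀ).det := by rw [hconj]
      _ = M.det * (D₁ - c • 1).det * M.det := by
          rw [Matrix.det_mul, Matrix.det_mul, Matrix.det_transpose]
      _ = (D₁ - c • 1).det := by
          rw [mul_comm (M.det) _, mul_assoc, hdetM, mul_one]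
  have hdiagdet : ∀ (D : Matrix (Fin p) (Fin p) ℝ), D.IsDiag → ∀ c : ℝ,
      (D - c • 1).det = ∏ i, (D i i - c) := by
    intro D hD c
    have : D - c • 1 = Matrix.diagonal (fun i => D i i - c) := by
      ext a b
      by_cases hab : a = b
      · subst hab
        simp [Matrix.sub_apply, Matrix.smul_apply, Matrix.one_apply, Matrix.diagonal_apply]
      · simp [Matrix.sub_apply, Matrix.smul_apply, Matrix.one_apply_ne hab,
          Matrix.diagonal_apply_ne _ hab, hD hab]
    rw [this, Matrix.det_diagonal]
  have hex : ∀ i : Fin p, ∃ j : Fin p, D₂ j j = D₁ i i := by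
    intro i
    have h0 : (D₁ - (D₁ i i) • 1).det = 0 := by
      rw [hdiagdet D₁ hD₁.1]
      exact Finset.prod_eq_zero (Finset.mem_univ i) (by simp)
    have h2 : (D₂ - (D₁ i i) • 1).det = 0 := by rw [hdet, h0]
    rw [hdiagdet D₂ hD₂.1] at h2
    obtain ⟨j, -, hj⟩ := Finset.prod_eq_zero_iff.mp h2
    exact ⟨j, by linarith [sub_eq_zero.mp hj]⟩
  choose σ₀ hσ₀ using hex
  have hσinj : Function.Injective σ₀ := by
    intro i i' h
    apply hinj
    show D₁ i i = D₁ i' i'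
    rw [← hσ₀ i, ← hσ₀ i', h]
  exact ⟨Equiv.ofBijective σ₀ (Finite.injective_iff_bijective.mp hσinj),
    fun i => hσ₀ i⟩

lemma isSPD_conj {W : Matrix (Fin p) (Fin p) ℝ} (hW : IsSO W) {f : Fin p → ℝ}
    (hf : ∀ i, 0 < f i) : IsSPD (W * Matrix.diagonal f * Wᵀ) := by
  have hsymm : (W * Matrix.diagonal f * Wᵀ)ᵀ = W * Matrix.diagonal f * Wᵀ := by
    rw [Matrix.transpose_mul, Matrix.transpose_mul, Matrix.transpose_transpose,
      Matrix.diagonal_transpose, ← Matrix.mul_assoc]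
  refine ⟨hsymm, Matrix.PosDef.of_dotProduct_mulVec_pos ?_ ?_⟩
  · rw [Matrix.IsHermitian, Matrix.conjTranspose_eq_transpose_of_trivial]
    exact hsymm
  · intro x hx
    have hd : (Matrix.diagonal f).PosDef := Matrix.posDef_diagonal_iff.mpr hf
    set y := Wᵀ *ᵥ x with hy
    have hyne : y ≠ 0 := by
      intro h0
      apply hx
      have hxy : W *ᵥ y = x := by
        rw [hy, Matrix.mulVec_mulVec, hW.1, Matrix.one_mulVec]
      rw [← hxy, h0, Matrix.mulVec_zero]
    have hpos := hd.dotProduct_mulVec_pos hyne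
    have hstar : ∀ z : Fin p → ℝ, star z = z := fun z => funext fun j => by simp
    calc (0:ℝ) < dotProduct (star y) (Matrix.diagonal f *ᵥ y) := hpos
      _ = dotProduct (star x) ((W * Matrix.diagonal f * Wᵀ) *ᵥ x) := by
          rw [hstar, hstar, hy, ← Matrix.mulVec_mulVec, ← Matrix.mulVec_mulVec,
            Matrix.dotProduct_mulVec x, ← Matrix.mulVec_transpose]

set_option maxHeartbeats 1000000 in
/-- if the data lie in a closed `d_SR`-ball of radius `r < δ(S₀)/3`
around a top-stratum point `S₀`, then every minimizer of the sample Fréchet function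
`S ↦ (1/n) ∑ d_SR²(X_i, S)` has `p` distinct eigenvalues. -/
theorem sample_SR_mean_top (p : ℕ) (k : ℝ) (hk : 0 < k) (n : ℕ) (hn : 0 < n)
    (X : Fin n → Matrix (Fin p) (Fin p) ℝ) (hX : ∀ i, IsSPD (X i))
    (S₀ : Matrix (Fin p) (Fin p) ℝ) (hS₀ : IsSPD S₀) (hS₀top : HasDistinctEigs S₀)
    (r : ℝ) (hr0 : 0 < r) (hr : r < deltaFun k S₀ / 3)
    (hball : ∀ i, dSR k (X i) S₀ ≤ r)
    (S : Matrix (Fin p) (Fin p) ℝ) (hS : IsSPD S)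
    (hmin : ∀ S' : Matrix (Fin p) (Fin p) ℝ, IsSPD S' →
      (1 / n : ℝ) * ∑ i, (dSR k (X i) S) ^ 2 ≤ (1 / n : ℝ) * ∑ i, (dSR k (X i) S') ^ 2) :
    HasDistinctEigs S := by
  by_contra habs
  have hδ : 3 * r < deltaFun k S₀ := by linarith
  -- there is a data point close to the minimizer S
  have hexists : ∃ i, dSR k (X i) S ≤ r := by
    by_contra hc
    push_neg at hc
    haveI : Nonempty (Fin n) := ⟨⟨0, hn⟩⟩
    have hn0 : (0:ℝ) < 1 / n := by positivity
    have hsum : ∑ i, dSR k (X i) S ^ 2 ≤ ∑ i, dSR k (X i) S₀ ^ 2 :=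
      (mul_le_mul_iff_right₀ hn0).mp (hmin S₀ hS₀)
    have hsum2 : ∑ i, dSR k (X i) S₀ ^ 2 ≤ ∑ _i : Fin n, r ^ 2 :=
      Finset.sum_le_sum fun i _ => by nlinarith [dSR_nonneg k (X i) S₀, hball i]
    have hsum3 : ∑ _i : Fin n, r ^ 2 < ∑ i, dSR k (X i) S ^ 2 :=
      Finset.sum_lt_sum_of_nonempty Finset.univ_nonempty
        (fun i _ => by nlinarith [hc i])
    linarith
  obtain ⟨i, hir⟩ := hexists
  -- the data point has distinct eigenvalues
  have hXrep : ¬ HasRepeatedEig (X i) := by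
    intro hrep
    have h1 : deltaFun k S₀ ≤ dSR k S₀ (X i) := deltaFun_le k S₀ (X i) (hX i) hrep
    rw [dSR_symm] at h1
    linarith [hball i]
  -- small positive tolerances
  have hsk : 0 < Real.sqrt k := Real.sqrt_pos.mpr hk
  set ε₁ : ℝ := r / 4 with hε₁
  set ε₂ : ℝ := r / (4 * Real.sqrt k) with hε₂
  have hε₁pos : 0 < ε₁ := by positivity
  have hε₂pos : 0 < ε₂ := by positivity
  -- near-optimal decompositions for dSR (X i) S₀
  obtain ⟨mA, hmA⟩ := exists_eigenDecomp (X i) (hX i)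
  obtain ⟨mB, hmB⟩ := exists_eigenDecomp S₀ hS₀
  obtain ⟨mC, hmC⟩ := exists_eigenDecomp S hS
  obtain ⟨x₁, hx₁mem, hx₁lt⟩ := Real.lt_sInf_add_pos
    (s := {x : ℝ | ∃ mX mY, IsEigenDecomp (X i) mX ∧ IsEigenDecomp S₀ mY ∧ x = dM k mX mY})
    ⟨_, mA, mB, hmA, hmB, rfl⟩ hε₁pos
  obtain ⟨mX, m₀, hmX, hm₀, rfl⟩ := hx₁mem
  have hd₁ : dM k mX m₀ < r + ε₁ := by
    have h := hball i
    have h' : sInf {x : ℝ | ∃ mX mY, IsEigenDecomp (X i) mX ∧ IsEigenDecomp S₀ mY ∧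
        x = dM k mX mY} ≤ r := h
    linarith
  -- near-optimal decompositions for dSR (X i) S
  obtain ⟨x₂, hx₂mem, hx₂lt⟩ := Real.lt_sInf_add_pos
    (s := {x : ℝ | ∃ mX mY, IsEigenDecomp (X i) mX ∧ IsEigenDecomp S mY ∧ x = dM k mX mY})
    ⟨_, mA, mC, hmA, hmC, rfl⟩ hε₁pos
  obtain ⟨mX', mS₂, hmX', hmS₂, rfl⟩ := hx₂mem
  have hd₂ : dM k mX' mS₂ < r + ε₁ := by
    have h' : sInf {x : ℝ | ∃ mX mY, IsEigenDecomp (X i) mX ∧ IsEigenDecomp S mY ∧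
        x = dM k mX mY} ≤ r := hir
    linarith
  -- injectivity facts
  have hinj : Function.Injective fun j => mX.2 j j := by
    by_contra hni
    exact hXrep ⟨mX, hmX, hni⟩
  have hSnoninj : ¬ Function.Injective fun j => mS₂.2 j j := fun h => habs ⟨mS₂, hmS₂, h⟩
  obtain ⟨σ, hσ⟩ := exists_perm_of_decomps (X i) mX mX' hmX hmX' hinj
  -- the permuted repeated diagonal
  set f : Fin p → ℝ := fun j => mS₂.2 (σ j) (σ j) with hf
  have hfpos : ∀ j, 0 < f j := fun j => hmS₂.1.2.2 (σ j)
  have hDnoninj : ¬ Function.Injective fun j => (Matrix.diagonal f) j j := by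
    obtain ⟨a, b, hab, hne⟩ := Function.not_injective_iff.mp hSnoninj
    rw [Function.not_injective_iff]
    refine ⟨σ.symm a, σ.symm b, ?_, fun h => hne (σ.symm.injective h)⟩
    simp only [Matrix.diagonal_apply_eq, hf, Equiv.apply_symm_apply]
    exact hab
  -- skew-symmetric logs
  obtain ⟨A, hAskew, hAlt⟩ := exists_skew_log_lt mX.1 m₀.1 hε₂pos
  obtain ⟨B, hBskew, hBlt⟩ := exists_skew_log_lt mX'.1 mS₂.1 hε₂pos
  have hABskew : (A + B)ᵀ = -(A + B) := by
    rw [Matrix.transpose_add, hAskew, hBskew, neg_add]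
  set W : Matrix (Fin p) (Fin p) ℝ := NormedSpace.exp (A + B) * m₀.1 with hW
  have hWSO : IsSO W := (isSO_exp _ hABskew).mul hm₀.1.1
  have hexpW : NormedSpace.exp (A + B) = W * m₀.1ᵀ := by
    rw [hW, Matrix.mul_assoc, hm₀.1.1.1, Matrix.mul_one]
  have hdSOW : dSO m₀.1 W ≤ (1 / Real.sqrt 2) * frobNorm (A + B) :=
    dSO_le_of_exp _ _ _ hABskew hexpW
  have hc2 : (0:ℝ) ≤ 1 / Real.sqrt 2 := by positivity
  have hdSOW2 : dSO m₀.1 W ≤ dSO mX.1 m₀.1 + dSO mX'.1 mS₂.1 + 2 * ε₂ := by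
    have h1 : (1 / Real.sqrt 2) * frobNorm (A + B) ≤
        (1 / Real.sqrt 2) * frobNorm A + (1 / Real.sqrt 2) * frobNorm B := by
      rw [← mul_add]
      exact mul_le_mul_of_nonneg_left (frobNorm_add_le A B) hc2
    linarith
  -- the lower-stratum witness
  set m'' : Matrix (Fin p) (Fin p) ℝ × Matrix (Fin p) (Fin p) ℝ :=
    (W, Matrix.diagonal f) with hm''
  have hdec'' : IsEigenDecomp (Fmap m'') m'' :=
    ⟨⟨hWSO, Matrix.isDiag_diagonal f, fun j => by
      simpa [hm'', Matrix.diagonal_apply_eq] using hfpos j⟩, rfl⟩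
  have hSPD'' : IsSPD (Fmap m'') := isSPD_conj hWSO hfpos
  have hrep'' : HasRepeatedEig (Fmap m'') := ⟨m'', hdec'', hDnoninj⟩
  -- distance chain
  have h1 : deltaFun k S₀ ≤ dSR k S₀ (Fmap m'') := deltaFun_le k S₀ _ hSPD'' hrep''
  have h2 : dSR k S₀ (Fmap m'') ≤ dM k m₀ m'' := dSR_le_dM k S₀ _ m₀ m'' hm₀ hdec''
  -- numerics
  set a₁ := dSO mX.1 m₀.1 with ha₁
  set b₁ := dDiag mX.2 m₀.2 with hb₁
  set a₂ := dSO mX'.1 mS₂.1 with ha₂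
  set b₂ := dDiag mX'.2 mS₂.2 with hb₂
  have ha₁0 : 0 ≤ a₁ := dSO_nonneg _ _
  have ha₂0 : 0 ≤ a₂ := dSO_nonneg _ _
  have hb₁0 : 0 ≤ b₁ := dDiag_nonneg _ _
  have hb₂0 : 0 ≤ b₂ := dDiag_nonneg _ _
  have hW0 : 0 ≤ dSO m₀.1 W := dSO_nonneg _ _
  have hDD0 : 0 ≤ dDiag m₀.2 m''.2 := dDiag_nonneg _ _
  have hBstep : dDiag m₀.2 m''.2 ≤ b₁ + b₂ := by
    have ht : dDiag m₀.2 m''.2 ≤ dDiag m₀.2 mX.2 + dDiag mX.2 m''.2 := dDiag_triangle _ _ _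
    have hsym : dDiag m₀.2 mX.2 = b₁ := dDiag_symm _ _
    have heq : dDiag mX.2 m''.2 = b₂ := by
      unfold dDiag
      congr 1
      have : ∀ j, (Real.log (mX.2 j j) - Real.log (m''.2 j j)) ^ 2 =
          (fun l => (Real.log (mX'.2 l l) - Real.log (mS₂.2 l l)) ^ 2) (σ j) := by
        intro j
        simp only [hm'', Matrix.diagonal_apply_eq, hf, ← hσ j]
      rw [Finset.sum_congr rfl fun j _ => this j]
      exact Equiv.sum_comp σ (fun l => (Real.log (mX'.2 l l) - Real.log (mS₂.2 l l)) ^ 2)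
    linarith
  have hAstep : dSO m₀.1 W ≤ a₁ + a₂ + 2 * ε₂ := hdSOW2
  have hsq : Real.sqrt k ^ 2 = k := Real.sq_sqrt hk.le
  have hdm'' : dM k m₀ m'' = Real.sqrt (k * dSO m₀.1 W ^ 2 + dDiag m₀.2 m''.2 ^ 2) := rfl
  have hstepC : dM k m₀ m'' ≤
      Real.sqrt (k * (a₁ + a₂ + 2 * ε₂) ^ 2 + (b₁ + b₂) ^ 2) := by
    rw [hdm'']
    apply Real.sqrt_le_sqrt
    have h1' : dSO m₀.1 W ^ 2 ≤ (a₁ + a₂ + 2 * ε₂) ^ 2 := by nlinarith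
    have h2' : dDiag m₀.2 m''.2 ^ 2 ≤ (b₁ + b₂) ^ 2 := by nlinarith
    nlinarith [hk.le]
  have hstepD : Real.sqrt (k * (a₁ + a₂ + 2 * ε₂) ^ 2 + (b₁ + b₂) ^ 2) ≤
      Real.sqrt (k * (a₁ + a₂) ^ 2 + (b₁ + b₂) ^ 2) + 2 * Real.sqrt k * ε₂ := by
    have hm := mink2 (Real.sqrt k * (a₁ + a₂)) (b₁ + b₂) (Real.sqrt k * (2 * ε₂)) 0
    have e1 : (Real.sqrt k * (a₁ + a₂) + Real.sqrt k * (2 * ε₂)) ^ 2 + (b₁ + b₂ + 0) ^ 2 =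
        k * (a₁ + a₂ + 2 * ε₂) ^ 2 + (b₁ + b₂) ^ 2 := by
      linear_combination ((a₁ + a₂ + 2 * ε₂) ^ 2) * hsq
    have e2 : (Real.sqrt k * (a₁ + a₂)) ^ 2 + (b₁ + b₂) ^ 2 =
        k * (a₁ + a₂) ^ 2 + (b₁ + b₂) ^ 2 := by
      linear_combination ((a₁ + a₂) ^ 2) * hsq
    have e3 : Real.sqrt ((Real.sqrt k * (2 * ε₂)) ^ 2 + 0 ^ 2) = 2 * Real.sqrt k * ε₂ := by
      rw [show (Real.sqrt k * (2 * ε₂)) ^ 2 + 0 ^ 2 = (2 * Real.sqrt k * ε₂) ^ 2 by ring]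
      exact Real.sqrt_sq (by positivity)
    rw [e1, e2, e3] at hm
    exact hm
  have hstepE : Real.sqrt (k * (a₁ + a₂) ^ 2 + (b₁ + b₂) ^ 2) ≤
      Real.sqrt (k * a₁ ^ 2 + b₁ ^ 2) + Real.sqrt (k * a₂ ^ 2 + b₂ ^ 2) := by
    have hm := mink2 (Real.sqrt k * a₁) b₁ (Real.sqrt k * a₂) b₂
    have e1 : (Real.sqrt k * a₁ + Real.sqrt k * a₂) ^ 2 + (b₁ + b₂) ^ 2 =
        k * (a₁ + a₂) ^ 2 + (b₁ + b₂) ^ 2 := by linear_combination ((a₁ + a₂) ^ 2) * hsq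
    have e2 : (Real.sqrt k * a₁) ^ 2 + b₁ ^ 2 = k * a₁ ^ 2 + b₁ ^ 2 := by
      linear_combination (a₁ ^ 2) * hsq
    have e3 : (Real.sqrt k * a₂) ^ 2 + b₂ ^ 2 = k * a₂ ^ 2 + b₂ ^ 2 := by
      linear_combination (a₂ ^ 2) * hsq
    rw [e1, e2, e3] at hm
    exact hm
  have hdm₁ : dM k mX m₀ = Real.sqrt (k * a₁ ^ 2 + b₁ ^ 2) := rfl
  have hdm₂ : dM k mX' mS₂ = Real.sqrt (k * a₂ ^ 2 + b₂ ^ 2) := rfl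
  have hε₂val : 2 * Real.sqrt k * ε₂ = r / 2 := by
    rw [hε₂]
    field_simp
    ring
  have hfinal : deltaFun k S₀ ≤ dM k mX m₀ + dM k mX' mS₂ + 2 * Real.sqrt k * ε₂ := by
    rw [hdm₁, hdm₂]
    calc deltaFun k S₀ ≤ dM k m₀ m'' := h1.trans h2
      _ ≤ Real.sqrt (k * (a₁ + a₂ + 2 * ε₂) ^ 2 + (b₁ + b₂) ^ 2) := hstepC
      _ ≤ Real.sqrt (k * (a₁ + a₂) ^ 2 + (b₁ + b₂) ^ 2) + 2 * Real.sqrt k * ε₂ := hstepD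
      _ ≤ Real.sqrt (k * a₁ ^ 2 + b₁ ^ 2) + Real.sqrt (k * a₂ ^ 2 + b₂ ^ 2)
          + 2 * Real.sqrt k * ε₂ := by linarith
  rw [hε₂val] at hfinal
  have hfin2 : deltaFun k S₀ ≤ 3 * r := by linarith
  linarith


end SR
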